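/- Let F be holomorphic on an open set U ⊂ ℂ containing the negative imaginary axis i(−∞,0), with F(iy) ∈ iℝ and F'(iy) ∈ ℝ \ {0} for all y < 0, and suppose F' has no zeros on U. If F'(iy) > 0 for all y < 0, then F is univalent (injective) on some open neighborhood of i(−∞,0) contained in U. -/

import Mathlib

open Complex Set intervalIntegral

lemma segFTC {F : ℂ → ℂ} {U : Set ℂ} (hU : IsOpen U) (hF : DifferentiableOn ℂ F U)
    (hC : ContinuousOn (deriv F) U) (a b : ℂ)
    (hseg : ∀ t : ℝ, t ∈ Set.Icc (0:ℝ) 1 → a + (t:ℂ) * (b - a) ∈ U) :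
    F b - F a = (∫ t in (0:ℝ)..1, deriv F (a + (t:ℂ) * (b - a))) * (b - a) := by
  set γ : ℝ → ℂ := fun t => a + (t:ℂ) * (b - a) with hγ
  have hγc : Continuous γ := by continuity
  have hcurve : ∀ t : ℝ, HasDerivAt γ (b - a) t := by
    intro t
    have h1 : HasDerivAt (fun t : ℝ => (t:ℂ)) 1 t := by simpa using (hasDerivAt_id t).ofReal_comp
    have := (h1.mul_const (b - a)).const_add a; rw [one_mul] at this; exact this
  have hd : ∀ t ∈ Set.uIcc (0:ℝ) 1,
      HasDerivAt (fun t => F (γ t)) (deriv F (γ t) * (b - a)) t := by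
    intro t ht
    rw [Set.uIcc_of_le zero_le_one] at ht
    have hz : γ t ∈ U := hseg t ht
    have hFd : HasDerivAt F (deriv F (γ t)) (γ t) :=
      ((hF.differentiableAt (hU.mem_nhds hz))).hasDerivAt
    have := (hFd.hasFDerivAt.restrictScalars ℝ).comp_hasDerivAt t (hcurve t)
    exact hFd.comp t (hcurve t)
  have hint : IntervalIntegrable (fun t => deriv F (γ t) * (b - a)) MeasureTheory.volume 0 1 := by
    apply ContinuousOn.intervalIntegrable
    rw [Set.uIcc_of_le zero_le_one]
    exact ((hC.comp hγc.continuousOn (fun t ht => hseg t ht)).mul continuousOn_const)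
  have := intervalIntegral.integral_eq_sub_of_hasDerivAt hd hint
  rw [intervalIntegral.integral_mul_const] at this
  have h0 : γ 0 = a := by simp [hγ]
  have h1 : γ 1 = b := by simp [hγ]
  rw [h0, h1] at this
  exact this.symm


lemma intInt {F : ℂ → ℂ} {U : Set ℂ}
    (hC : ContinuousOn (deriv F) U) (a b : ℂ)
    (hseg : ∀ t : ℝ, t ∈ Set.Icc (0:ℝ) 1 → a + (t:ℂ) * (b - a) ∈ U) :
    IntervalIntegrable (fun t : ℝ => deriv F (a + (t:ℂ) * (b - a))) MeasureTheory.volume 0 1 := by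
  apply ContinuousOn.intervalIntegrable
  rw [Set.uIcc_of_le zero_le_one]
  exact hC.comp (Continuous.continuousOn (by continuity)) (fun t ht => hseg t ht)


lemma re_intervalIntegral {f : ℝ → ℂ} (hf : IntervalIntegrable f MeasureTheory.volume 0 1) :
    (∫ t in (0:ℝ)..1, f t).re = ∫ t in (0:ℝ)..1, (f t).re := by
  simpa using (Complex.reCLM.intervalIntegral_comp_comm hf).symm

-- Noshiro–Warschawski on a segment


lemma nw {F : ℂ → ℂ} {U : Set ℂ} (hU : IsOpen U) (hF : DifferentiableOn ℂ F U)
    (hC : ContinuousOn (deriv F) U) (a b : ℂ) (hab : a ≠ b)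
    (hseg : ∀ t : ℝ, t ∈ Set.Icc (0:ℝ) 1 → a + (t:ℂ) * (b - a) ∈ U)
    (hpos : ∀ t : ℝ, t ∈ Set.Icc (0:ℝ) 1 → 0 < (deriv F (a + (t:ℂ) * (b - a))).re) :
    F a ≠ F b := by
  intro heq
  have h := segFTC hU hF hC a b hseg
  rw [heq, sub_self] at h
  have hba : b - a ≠ 0 := sub_ne_zero.mpr hab.symm
  have hI : (∫ t in (0:ℝ)..1, deriv F (a + (t:ℂ) * (b - a))) = 0 := by
    rcases mul_eq_zero.mp h.symm with h' | h'
    · exact h'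
    · exact absurd h' hba
  have hire : (∫ t in (0:ℝ)..1, deriv F (a + (t:ℂ) * (b - a))).re = 0 := by rw [hI]; simp
  rw [re_intervalIntegral (intInt hC a b hseg)] at hire
  have hpos' : 0 < ∫ t in (0:ℝ)..1, (deriv F (a + (t:ℂ) * (b - a))).re := by
    apply intervalIntegral.intervalIntegral_pos_of_pos_on
    · apply ContinuousOn.intervalIntegrable
      rw [Set.uIcc_of_le zero_le_one]
      exact Complex.continuous_re.comp_continuousOn
        (hC.comp (Continuous.continuousOn (by continuity)) (fun t ht => hseg t ht))
    · exact fun t ht => hpos t ⟨le_of_lt ht.1, le_of_lt ht.2⟩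
    · norm_num
  linarith


lemma psi_deriv {F : ℂ → ℂ} {U : Set ℂ} (hU : IsOpen U) (hF : DifferentiableOn ℂ F U)
    (y : ℝ) (hy : (y:ℂ) * Complex.I ∈ U) :
    HasDerivAt (fun y : ℝ => (F ((y:ℂ) * Complex.I)).im)
      ((deriv F ((y:ℂ) * Complex.I)).re) y := by
  have h1 : HasDerivAt (fun y : ℝ => (y:ℂ) * Complex.I) Complex.I y := by
    simpa using ((Complex.ofRealCLM.hasDerivAt (x := y)).mul_const Complex.I)
  have hFd : HasDerivAt F (deriv F ((y:ℂ) * Complex.I)) ((y:ℂ) * Complex.I) :=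
    (hF.differentiableAt (hU.mem_nhds hy)).hasDerivAt
  have hcomp := (hFd.hasFDerivAt.restrictScalars ℝ).comp_hasDerivAt y h1
  have := Complex.imCLM.hasFDerivAt.comp_hasDerivAt y hcomp
  simp [Complex.mul_im] at this; exact this


lemma horiz {F : ℂ → ℂ} {U : Set ℂ} (hU : IsOpen U) (hF : DifferentiableOn ℂ F U)
    (hC : ContinuousOn (deriv F) U) (a : ℂ) (r M : ℝ) (hr : 0 ≤ r) (hM : 0 ≤ M)
    (hre : |a.re| ≤ r)
    (hseg : ∀ t : ℝ, t ∈ Set.Icc (0:ℝ) 1 →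
      (a.im : ℂ) * Complex.I + (t:ℂ) * (a - (a.im : ℂ) * Complex.I) ∈ U)
    (hbd : ∀ t : ℝ, t ∈ Set.Icc (0:ℝ) 1 →
      |(deriv F ((a.im : ℂ) * Complex.I + (t:ℂ) * (a - (a.im : ℂ) * Complex.I))).im| ≤ M) :
    |(F a).im - (F ((a.im : ℂ) * Complex.I)).im| ≤ r * M := by
  set p := (a.im : ℂ) * Complex.I with hp
  have h := segFTC hU hF hC p a hseg
  have hint := intInt hC p a hseg
  have hsub : a - p = ((a.re : ℝ) : ℂ) := by
    apply Complex.ext <;> simp [hp]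
  have hreI : (∫ t in (0:ℝ)..1, deriv F (p + (t:ℂ) * (a - p))).im
      = ∫ t in (0:ℝ)..1, (deriv F (p + (t:ℂ) * (a - p))).im := by
    simpa using (Complex.imCLM.intervalIntegral_comp_comm hint).symm
  have him : (F a).im - (F p).im = (∫ t in (0:ℝ)..1,
      (deriv F (p + (t:ℂ) * (a - p))).im) * a.re := by
    have h2 := congrArg Complex.im h
    rw [Complex.sub_im] at h2
    rw [h2, Complex.mul_im, hreI]
    simp [hp]
  rw [him]
  have hbd2 : |∫ t in (0:ℝ)..1, (deriv F (p + (t:ℂ) * (a - p))).im| ≤ M := by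
    have := intervalIntegral.norm_integral_le_of_norm_le_const
      (C := M) (f := fun t : ℝ => (deriv F (p + (t:ℂ) * (a - p))).im)
      (a := 0) (b := 1) ?_
    · simpa using this
    · intro t ht
      rw [Set.uIoc_of_le zero_le_one] at ht
      exact (by simpa using hbd t ⟨le_of_lt ht.1, ht.2⟩)
  calc |(∫ t in (0:ℝ)..1, (deriv F (p + (t:ℂ) * (a - p))).im) * a.re|
      = |∫ t in (0:ℝ)..1, (deriv F (p + (t:ℂ) * (a - p))).im| * |a.re| := abs_mul _ _
    _ ≤ M * r := mul_le_mul hbd2 hre (abs_nonneg _) hM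
    _ = r * M := mul_comm _ _


lemma psi_lower {F : ℂ → ℂ} {U : Set ℂ} (hU : IsOpen U) (hF : DifferentiableOn ℂ F U)
    (hC : ContinuousOn (deriv F) U)
    (haxis : ∀ y : ℝ, y < 0 → (y : ℂ) * Complex.I ∈ U)
    (hderiv_pos : ∀ y : ℝ, y < 0 → 0 < (deriv F ((y : ℂ) * Complex.I)).re)
    (y1 y2 u v M0 : ℝ) (h1u : y1 ≤ u) (huv : u ≤ v) (hv2 : v ≤ y2) (hneg : y2 < 0)
    (hM : ∀ y ∈ Set.Icc u v, M0 ≤ (deriv F ((y:ℂ) * Complex.I)).re) :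
    (v - u) * M0 ≤ (F ((y2:ℂ) * Complex.I)).im - (F ((y1:ℂ) * Complex.I)).im := by
  have h12 : y1 ≤ y2 := le_trans h1u (le_trans huv hv2)
  have hax : ∀ y : ℝ, y ≤ y2 → (y:ℂ) * Complex.I ∈ U :=
    fun y hy => haxis y (lt_of_le_of_lt hy hneg)
  set m : ℝ → ℝ := fun y => (deriv F ((y:ℂ) * Complex.I)).re with hmdef
  have hpsi : ∀ y ∈ Set.uIcc y1 y2, HasDerivAt (fun y : ℝ => (F ((y:ℂ) * Complex.I)).im)
      (m y) y := by
    intro y hy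
    rw [Set.uIcc_of_le h12] at hy
    exact psi_deriv hU hF y (hax y hy.2)
  have hmc : ∀ lo hi : ℝ, y1 ≤ lo → lo ≤ hi → hi ≤ y2 →
      IntervalIntegrable m MeasureTheory.volume lo hi := by
    intro lo hi hlo hlohi hhi
    apply ContinuousOn.intervalIntegrable
    apply Complex.continuous_re.comp_continuousOn
    apply hC.comp (Continuous.continuousOn (by continuity))
    intro y hy
    rw [Set.uIcc_of_le hlohi] at hy
    exact hax y (le_trans hy.2 hhi)
  have hftc : (F ((y2:ℂ) * Complex.I)).im - (F ((y1:ℂ) * Complex.I)).im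
      = ∫ y in y1..y2, m y :=
    (intervalIntegral.integral_eq_sub_of_hasDerivAt hpsi (hmc y1 y2 le_rfl h12 le_rfl)).symm
  rw [hftc]
  have hsplit1 : ∫ y in y1..y2, m y = (∫ y in y1..u, m y) + ∫ y in u..y2, m y :=
    (intervalIntegral.integral_add_adjacent_intervals
      (hmc y1 u le_rfl h1u (le_trans huv hv2)) (hmc u y2 h1u (le_trans huv hv2) le_rfl)).symm
  have hsplit2 : ∫ y in u..y2, m y = (∫ y in u..v, m y) + ∫ y in v..y2, m y :=
    (intervalIntegral.integral_add_adjacent_intervals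
      (hmc u v h1u huv hv2) (hmc v y2 (le_trans h1u huv) hv2 le_rfl)).symm
  have hnn : ∀ lo hi : ℝ, y1 ≤ lo → hi ≤ y2 → 0 ≤ ∫ y in lo..hi, m y → True := fun _ _ _ _ _ => trivial
  have h1 : 0 ≤ ∫ y in y1..u, m y := by
    apply intervalIntegral.integral_nonneg h1u
    intro y hy
    exact le_of_lt (hderiv_pos y (lt_of_le_of_lt (le_trans hy.2 (le_trans huv hv2)) hneg))
  have h3 : 0 ≤ ∫ y in v..y2, m y := by
    apply intervalIntegral.integral_nonneg hv2
    intro y hy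
    exact le_of_lt (hderiv_pos y (lt_of_le_of_lt hy.2 hneg))
  have h2 : (v - u) * M0 ≤ ∫ y in u..v, m y := by
    have hconst : ∫ _ in u..v, M0 = (v - u) * M0 := by
      rw [intervalIntegral.integral_const]; ring_nf
    rw [← hconst]
    apply intervalIntegral.integral_mono_on huv (intervalIntegrable_const)
      (hmc u v h1u huv hv2) hM
  linarith


lemma rad_ex {F : ℂ → ℂ} {U : Set ℂ} (hU : IsOpen U)
    (hC : ContinuousOn (deriv F) U)
    (haxis : ∀ y : ℝ, y < 0 → (y : ℂ) * Complex.I ∈ U)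
    (hderiv_real : ∀ y : ℝ, y < 0 → (deriv F ((y : ℂ) * Complex.I)).im = 0)
    (hderiv_pos : ∀ y : ℝ, y < 0 → 0 < (deriv F ((y : ℂ) * Complex.I)).re) (s : ℝ) :
    ∃ r : ℝ, 0 < r ∧ (s < 0 →
      4 * r < -s ∧ Metric.closedBall ((s:ℂ) * Complex.I) (4 * r) ⊆ U ∧
      ∀ z ∈ Metric.closedBall ((s:ℂ) * Complex.I) (4 * r),
        (deriv F ((s:ℂ) * Complex.I)).re / 2 ≤ (deriv F z).re ∧
        |(deriv F z).im| ≤ (deriv F ((s:ℂ) * Complex.I)).re / 16) := by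
  by_cases hs : s < 0
  · set c := (s:ℂ) * Complex.I with hc
    have hcU : c ∈ U := haxis s hs
    set m := (deriv F c).re with hm
    have hm0 : 0 < m := hderiv_pos s hs
    have hcont : ContinuousAt (deriv F) c := hC.continuousAt (hU.mem_nhds hcU)
    set O : Set ℂ := {w : ℂ | m / 2 < w.re ∧ |w.im| < m / 16} with hO
    have hOopen : IsOpen O := by
      apply IsOpen.inter
      · exact isOpen_lt continuous_const Complex.continuous_re
      · exact isOpen_lt (Complex.continuous_im.abs) continuous_const
    have hmemO : deriv F c ∈ O := by
      constructor
      · simp only [← hm]; linarith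
      · rw [hderiv_real s hs]; simp; positivity
    have hev : ∀ᶠ z in nhds c, z ∈ U ∧ deriv F z ∈ O :=
      Filter.Eventually.and (hU.mem_nhds hcU) (hcont.eventually_mem (hOopen.mem_nhds hmemO))
    rw [Metric.eventually_nhds_iff_ball] at hev
    obtain ⟨ε, hε, hball⟩ := hev
    have hspos : 0 < -s := by linarith
    refine ⟨min (ε / 8) (-s / 8), by positivity, fun _ => ?_⟩
    have h4r : 4 * min (ε / 8) (-s / 8) ≤ ε / 2 := by
      have := min_le_left (ε / 8) (-s / 8); linarith
    have h4s : 4 * min (ε / 8) (-s / 8) ≤ -s / 2 := by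
      have := min_le_right (ε / 8) (-s / 8); linarith
    refine ⟨by linarith, ?_, ?_⟩
    · intro z hz
      have : z ∈ Metric.ball c ε := by
        rw [Metric.mem_ball]
        calc dist z c ≤ 4 * min (ε / 8) (-s / 8) := Metric.mem_closedBall.mp hz
          _ ≤ ε / 2 := h4r
          _ < ε := by linarith
      exact (hball _ this).1
    · intro z hz
      have : z ∈ Metric.ball c ε := by
        rw [Metric.mem_ball]
        calc dist z c ≤ 4 * min (ε / 8) (-s / 8) := Metric.mem_closedBall.mp hz
          _ ≤ ε / 2 := h4r
          _ < ε := by linarith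
      exact ⟨le_of_lt (hball _ this).2.1, le_of_lt (hball _ this).2.2⟩
  · exact ⟨1, one_pos, fun h => absurd h hs⟩


set_option maxHeartbeats 1000000 in
/-- Noshiro–Warschawski-type univalence near the negative imaginary axis:
if `F` is holomorphic on an open `U ⊇ i(-∞,0)`, is purely imaginary with real
nonvanishing derivative on `i(-∞,0)`, `F'` has no zeros on `U`, and
`F'(iy) > 0` for all `y < 0`, then `F` is injective on some open neighborhood
of `i(-∞,0)` contained in `U`. -/
theorem univalent_near_negative_imaginary_axis (F : ℂ → ℂ) (U : Set ℂ)
    (hU : IsOpen U) (haxis : ∀ y : ℝ, y < 0 → (y : ℂ) * Complex.I ∈ U)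
    (hF : DifferentiableOn ℂ F U)
    (himag : ∀ y : ℝ, y < 0 → (F ((y : ℂ) * Complex.I)).re = 0)
    (hderiv_real : ∀ y : ℝ, y < 0 → (deriv F ((y : ℂ) * Complex.I)).im = 0)
    (hderiv_ne : ∀ z ∈ U, deriv F z ≠ 0)
    (hderiv_pos : ∀ y : ℝ, y < 0 → 0 < (deriv F ((y : ℂ) * Complex.I)).re) :
    ∃ V : Set ℂ, IsOpen V ∧ V ⊆ U ∧ (∀ y : ℝ, y < 0 → (y : ℂ) * Complex.I ∈ V) ∧
      Set.InjOn F V := by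
  have hC : ContinuousOn (deriv F) U := ((hF.analyticOnNhd hU).deriv).continuousOn
  choose r hr using fun s => rad_ex hU hC haxis hderiv_real hderiv_pos s
  set c : ℝ → ℂ := fun s => (s:ℂ) * Complex.I with hcdef
  -- basic distance facts
  have him : ∀ (z : ℂ) (u : ℝ), |z.im - u| ≤ dist z (c u) := by
    intro z u
    rw [Complex.dist_eq]
    have h : z.im - u = (z - c u).im := by simp [hcdef]
    rw [h]; exact Complex.abs_im_le_norm _
  have hre : ∀ (z : ℂ) (u : ℝ), |z.re| ≤ dist z (c u) := by
    intro z u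
    rw [Complex.dist_eq]
    have h : z.re = (z - c u).re := by simp [hcdef]
    rw [h]; exact Complex.abs_re_le_norm _
  have hcc : ∀ u v : ℝ, dist (c u) (c v) = |u - v| := by
    intro u v
    rw [Complex.dist_eq]
    have h : c u - c v = ((u - v : ℝ) : ℂ) * Complex.I := by simp [hcdef]; push_cast; ring
    rw [h, norm_mul, Complex.norm_I, mul_one, Complex.norm_real, Real.norm_eq_abs]
  have hVsub : ∀ s : ℝ, s < 0 → Metric.ball (c s) (r s) ⊆ U := by
    intro s hs
    refine subset_trans (Metric.ball_subset_ball ?_) (subset_trans Metric.ball_subset_closedBall ((hr s).2 hs).2.1)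
    nlinarith [(hr s).1]
  refine ⟨⋃ s ∈ Set.Iio (0:ℝ), Metric.ball (c s) (r s),
    isOpen_biUnion (fun s _ => Metric.isOpen_ball), ?_, ?_, ?_⟩
  · intro z hz
    obtain ⟨s, hs, hzb⟩ := Set.mem_iUnion₂.mp hz
    exact hVsub s hs hzb
  · intro y hy
    exact Set.mem_iUnion₂.mpr ⟨y, hy, Metric.mem_ball_self (hr y).1⟩
  -- injectivity
  have key : ∀ (a b : ℂ) (s t : ℝ), s < 0 → t < 0 → s ≤ t →
      a ∈ Metric.ball (c s) (r s) → b ∈ Metric.ball (c t) (r t) → a ≠ b → F a ≠ F b := by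
    intro a b s t hs ht hst ha hb hab
    obtain ⟨h4s, hUs, hds⟩ := (hr s).2 hs
    obtain ⟨h4t, hUt, hdt⟩ := (hr t).2 ht
    have hrs0 : 0 < r s := (hr s).1
    have hrt0 : 0 < r t := (hr t).1
    set ms := (deriv F (c s)).re with hms
    set mt := (deriv F (c t)).re with hmt
    have hms0 : 0 < ms := hderiv_pos s hs
    have hmt0 : 0 < mt := hderiv_pos t ht
    by_cases hb4 : b ∈ Metric.ball (c s) (4 * r s)
    · -- both in ball (c s) (4 r s)
      have ha4 : a ∈ Metric.ball (c s) (4 * r s) :=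
        Metric.ball_subset_ball (by linarith) ha
      have hsegm : ∀ τ : ℝ, τ ∈ Set.Icc (0:ℝ) 1 →
          a + (τ:ℂ) * (b - a) ∈ Metric.ball (c s) (4 * r s) := by
        intro τ hτ
        have := (convex_ball (c s) (4 * r s)).add_smul_sub_mem ha4 hb4 hτ
        simpa [Complex.real_smul] using this
      exact nw hU hF hC a b hab
        (fun τ hτ => hUs (Metric.ball_subset_closedBall (hsegm τ hτ)))
        (fun τ hτ => by
          have := (hds _ (Metric.ball_subset_closedBall (hsegm τ hτ))).1
          linarith)
    · by_cases ha4 : a ∈ Metric.ball (c t) (4 * r t)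
      · have hb4' : b ∈ Metric.ball (c t) (4 * r t) :=
          Metric.ball_subset_ball (by linarith) hb
        have hsegm : ∀ τ : ℝ, τ ∈ Set.Icc (0:ℝ) 1 →
            a + (τ:ℂ) * (b - a) ∈ Metric.ball (c t) (4 * r t) := by
          intro τ hτ
          have := (convex_ball (c t) (4 * r t)).add_smul_sub_mem ha4 hb4' hτ
          simpa [Complex.real_smul] using this
        exact nw hU hF hC a b hab
          (fun τ hτ => hUt (Metric.ball_subset_closedBall (hsegm τ hτ)))
          (fun τ hτ => by
            have := (hdt _ (Metric.ball_subset_closedBall (hsegm τ hτ))).1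
            linarith)
      · -- far apart case
        have hdb : 4 * r s ≤ dist b (c s) := le_of_not_gt (fun h => hb4 (Metric.mem_ball.mpr h))
        have hda : 4 * r t ≤ dist a (c t) := le_of_not_gt (fun h => ha4 (Metric.mem_ball.mpr h))
        have hdisp : dist (c s) (c t) = t - s := by
          rw [hcc]; rw [abs_of_nonpos (by linarith)]; ring
        have htri1 : dist b (c s) ≤ dist b (c t) + dist (c t) (c s) := dist_triangle _ _ _
        have htri2 : dist a (c t) ≤ dist a (c s) + dist (c s) (c t) := dist_triangle _ _ _
        have hbt' : dist b (c t) < r t := Metric.mem_ball.mp hb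
        have has' : dist a (c s) < r s := Metric.mem_ball.mp ha
        rw [dist_comm (c t) (c s), hdisp] at htri1
        rw [hdisp] at htri2
        have hts : t - s > 3/2 * (r s + r t) := by linarith
        set y1 := a.im with hy1
        set y2 := b.im with hy2
        have hy1s : |y1 - s| < r s := lt_of_le_of_lt (him a s) has'
        have hy2t : |y2 - t| < r t := lt_of_le_of_lt (him b t) hbt'
        rw [abs_lt] at hy1s hy2t
        have hy1neg : y1 < 0 := by linarith
        have hy2neg : y2 < 0 := by linarith
        have hyy : y2 - y1 > (r s + r t) / 2 := by linarith
        -- psi lower bounds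
        have hpsi1 : (r s / 2) * (ms / 2) ≤ (F ((y2:ℂ) * Complex.I)).im - (F ((y1:ℂ) * Complex.I)).im := by
          have := psi_lower hU hF hC haxis hderiv_pos y1 y2 y1 (y1 + r s / 2) (ms / 2)
            le_rfl (by linarith) (by linarith) hy2neg ?_
          · simpa using this
          · intro y hy
            refine (hds ((y:ℂ) * Complex.I) ?_).1
            rw [Metric.mem_closedBall]
            have : dist ((y:ℂ) * Complex.I) (c s) = |y - s| := hcc y s
            rw [this, abs_le]
            constructor <;> [skip; skip] <;> cases' hy with hy1' hy2' <;> linarith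
        have hpsi2 : (r t / 2) * (mt / 2) ≤ (F ((y2:ℂ) * Complex.I)).im - (F ((y1:ℂ) * Complex.I)).im := by
          have := psi_lower hU hF hC haxis hderiv_pos y1 y2 (y2 - r t / 2) y2 (mt / 2)
            (by linarith) (by linarith) le_rfl hy2neg ?_
          · simpa using this
          · intro y hy
            refine (hdt ((y:ℂ) * Complex.I) ?_).1
            rw [Metric.mem_closedBall]
            have : dist ((y:ℂ) * Complex.I) (c t) = |y - t| := hcc y t
            rw [this, abs_le]
            constructor <;> cases' hy with hy1' hy2' <;> linarith
        -- horizontal bounds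
        have hmema : ∀ τ : ℝ, τ ∈ Set.Icc (0:ℝ) 1 →
            (y1:ℂ) * Complex.I + (τ:ℂ) * (a - (y1:ℂ) * Complex.I)
              ∈ Metric.closedBall (c s) (4 * r s) := by
          intro τ hτ
          rw [Metric.mem_closedBall]
          have hd : (y1:ℂ) * Complex.I + (τ:ℂ) * (a - (y1:ℂ) * Complex.I) - c s
              = ((y1 - s : ℝ) : ℂ) * Complex.I + (τ:ℂ) * ((a.re : ℝ) : ℂ) := by
            have hap : a - (y1:ℂ) * Complex.I = ((a.re : ℝ) : ℂ) := by
              apply Complex.ext <;> simp [hy1]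
            rw [hap]; simp [hcdef]; push_cast; ring
          rw [Complex.dist_eq, hd]
          calc ‖((y1 - s : ℝ) : ℂ) * Complex.I + (τ:ℂ) * ((a.re : ℝ) : ℂ)‖
              ≤ ‖((y1 - s : ℝ) : ℂ) * Complex.I‖
                + ‖(τ:ℂ) * ((a.re : ℝ) : ℂ)‖ := norm_add_le _ _
            _ = |y1 - s| + |τ| * |a.re| := by
                rw [norm_mul, norm_mul, Complex.norm_I, mul_one, Complex.norm_real,
                  Complex.norm_real, Complex.norm_real, Real.norm_eq_abs, Real.norm_eq_abs, Real.norm_eq_abs]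
            _ ≤ r s + 1 * r s := by
                have h1 : |τ| ≤ 1 := by rw [abs_le]; exact ⟨by linarith [hτ.1], hτ.2⟩
                have h2 : |a.re| ≤ r s := le_of_lt (lt_of_le_of_lt (hre a s) has')
                have h3 : |y1 - s| ≤ r s := by rw [abs_le]; constructor <;> linarith
                nlinarith [abs_nonneg a.re, abs_nonneg τ]
            _ ≤ 4 * r s := by linarith
        have hha : |(F a).im - (F ((y1:ℂ) * Complex.I)).im| ≤ r s * (ms / 16) := by
          refine horiz hU hF hC a (r s) (ms / 16) (le_of_lt hrs0) (by linarith) 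
            (le_of_lt (lt_of_le_of_lt (hre a s) has')) 
            (fun τ hτ => hUs (hmema τ hτ)) 
            (fun τ hτ => (hds _ (hmema τ hτ)).2)
        have hmemb : ∀ τ : ℝ, τ ∈ Set.Icc (0:ℝ) 1 →
            (y2:ℂ) * Complex.I + (τ:ℂ) * (b - (y2:ℂ) * Complex.I)
              ∈ Metric.closedBall (c t) (4 * r t) := by
          intro τ hτ
          rw [Metric.mem_closedBall]
          have hd : (y2:ℂ) * Complex.I + (τ:ℂ) * (b - (y2:ℂ) * Complex.I) - c t
              = ((y2 - t : ℝ) : ℂ) * Complex.I + (τ:ℂ) * ((b.re : ℝ) : ℂ) := by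
            have hap : b - (y2:ℂ) * Complex.I = ((b.re : ℝ) : ℂ) := by
              apply Complex.ext <;> simp [hy2]
            rw [hap]; simp [hcdef]; push_cast; ring
          rw [Complex.dist_eq, hd]
          calc ‖((y2 - t : ℝ) : ℂ) * Complex.I + (τ:ℂ) * ((b.re : ℝ) : ℂ)‖
              ≤ ‖((y2 - t : ℝ) : ℂ) * Complex.I‖
                + ‖(τ:ℂ) * ((b.re : ℝ) : ℂ)‖ := norm_add_le _ _
            _ = |y2 - t| + |τ| * |b.re| := by
                rw [norm_mul, norm_mul, Complex.norm_I, mul_one, Complex.norm_real,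
                  Complex.norm_real, Complex.norm_real, Real.norm_eq_abs, Real.norm_eq_abs, Real.norm_eq_abs]
            _ ≤ r t + 1 * r t := by
                have h1 : |τ| ≤ 1 := by rw [abs_le]; exact ⟨by linarith [hτ.1], hτ.2⟩
                have h2 : |b.re| ≤ r t := le_of_lt (lt_of_le_of_lt (hre b t) hbt')
                have h3 : |y2 - t| ≤ r t := by rw [abs_le]; constructor <;> linarith
                nlinarith [abs_nonneg b.re, abs_nonneg τ]
            _ ≤ 4 * r t := by linarith
        have hhb : |(F b).im - (F ((y2:ℂ) * Complex.I)).im| ≤ r t * (mt / 16) := by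
          refine horiz hU hF hC b (r t) (mt / 16) (le_of_lt hrt0) (by linarith) 
            (le_of_lt (lt_of_le_of_lt (hre b t) hbt')) 
            (fun τ hτ => hUt (hmemb τ hτ)) 
            (fun τ hτ => (hdt _ (hmemb τ hτ)).2)
        -- conclude
        intro heq
        have heqim : (F a).im = (F b).im := congrArg Complex.im heq
        rw [abs_le] at hha hhb
        have hprs : 0 < r s * ms := mul_pos hrs0 hms0
        have hprt : 0 < r t * mt := mul_pos hrt0 hmt0
        nlinarith [hha.1, hha.2, hhb.1, hhb.2, hpsi1, hpsi2]
  intro a ha b hb heq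
  by_contra hne
  obtain ⟨s, hs, has⟩ := Set.mem_iUnion₂.mp ha
  obtain ⟨t, ht, hbt⟩ := Set.mem_iUnion₂.mp hb
  rcases le_total s t with h | h
  · exact key a b s t hs ht h has hbt hne heq
  · exact key b a t s ht hs h hbt has (Ne.symm hne) heq.symm
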